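/- Let L > 0, let λ be the normalized Lebesgue measure on [0,L], let μ be the probability measure on [0,π] with μ(B) = (1/2)∫_B sin(θ) dθ, and let F : [0,L] × [0,π] → [0,L] × [0,π] be a measurable map that preserves λ × μ. Then λ × μ is invariant for the random billiard map F̄(s,θ) = F(s, T_i(θ)) applied with probability p_i(θ): for every Borel set E ⊆ [0,L] × [0,π], (λ×μ)(E) = Σ_{i=1}^4 ∬ 1_E(F(s, T_i(θ))) p_i(θ) dλ(s) dμ(θ). -/

import Mathlib

open Real MeasureTheory Set Filter Topology
open scoped ENNReal NNReal

noncomputable section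

namespace RandomBilliard

/-- The four maps `T_1, …, T_4` of the Feres random map
(index `i : Fin 4` stands for `T_{i+1}`). -/
def T (α : ℝ) : Fin 4 → ℝ → ℝ
  | 0 => fun θ => θ + 2 * α
  | 1 => fun θ => -θ + 2 * π - 4 * α
  | 2 => fun θ => θ - 2 * α
  | 3 => fun θ => -θ + 4 * α

/-- `u_a(θ) = (1/2)(1 + tan a / tan θ)`. -/
def u (a θ : ℝ) : ℝ := 1 / 2 * (1 + Real.tan a / Real.tan θ)

/-- The probabilities `p_1, …, p_4` of the Feres random map
(index `i : Fin 4` stands for `p_{i+1}`). -/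
def p (α : ℝ) : Fin 4 → ℝ → ℝ
  | 0 => fun θ =>
      if θ < α then 1
      else if θ < π - 3 * α then u α θ
      else if θ < π - 2 * α then 2 * Real.cos (2 * α) * u (2 * α) θ
      else 0
  | 1 => fun θ =>
      if θ < π - 3 * α then 0
      else if θ < π - 2 * α then u α θ - 2 * Real.cos (2 * α) * u (2 * α) θ
      else if θ < π - α then u α θ
      else 0
  | 2 => fun θ =>
      if θ < 2 * α then 0
      else if θ < 3 * α then 2 * Real.cos (2 * α) * u (2 * α) (-θ)
      else if θ < π - α then u α (-θ)
      else 1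
  | 3 => fun θ =>
      if θ < α then 0
      else if θ < 2 * α then u α (-θ)
      else if θ < 3 * α then u α (-θ) - 2 * Real.cos (2 * α) * u (2 * α) (-θ)
      else 0

/-- `iterT α x k θ = T_x^{(k)}(θ) = T_{x_k} ∘ ⋯ ∘ T_{x_1}(θ)`
(the term `x j : Fin 4` stands for the symbol `x_{j+1}`). -/
def iterT (α : ℝ) (x : ℕ → Fin 4) : ℕ → ℝ → ℝ
  | 0 => fun θ => θ
  | k + 1 => fun θ => T α (x k) (iterT α x k θ)

/-- `Σ_θ`: the admissible symbol sequences for `θ`, i.e. those whose every finite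
prefix has positive probability. -/
def SigmaTheta (α θ : ℝ) : Set (ℕ → Fin 4) :=
  {x | ∀ k : ℕ, 0 < ∏ j ∈ Finset.range k, p α (x j) (iterT α x j θ)}

/-- `C(θ)`: all possible future images of `θ` under the Feres random map. -/
def Cset (α θ : ℝ) : Set ℝ :=
  {θ' | θ' ∈ Set.Ioo 0 π ∧
    ∃ (x : ℕ → Fin 4) (k : ℕ), x ∈ SigmaTheta α θ ∧ iterT α x k θ = θ'}

/-- The probability measure `μ(A) = (1/2) ∫_A sin θ dθ` on `[0, π]`. -/
def mu0 : Measure ℝ :=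
  (volume.restrict (Set.Icc 0 π)).withDensity fun θ => ENNReal.ofReal (1 / 2 * Real.sin θ)

/-- One step of the evolution of a measure under the Feres random map:
`(stepMeasure α ν)(A) = ∫ K(θ, A) dν(θ)`, where `K(θ, A) = Σ_i p_i(θ) 1_A(T_i θ)`. -/
def stepMeasure (α : ℝ) (ν : Measure ℝ) : Measure ℝ :=
  ∑ i : Fin 4, Measure.map (T α i) (ν.withDensity fun θ => ENNReal.ofReal (p α i θ))

/-- One step of the evolution of a measure under the random billiard map in the circle
`F̄(s, θ) = (s + 2 T_i(θ) mod 2π, T_i(θ))` with probability `p_i(θ)`. -/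
def circleStep (α : ℝ) (ν : Measure (ℝ × ℝ)) : Measure (ℝ × ℝ) :=
  ∑ i : Fin 4,
    Measure.map
      (fun q : ℝ × ℝ => (toIcoMod Real.two_pi_pos 0 (q.1 + 2 * T α i q.2), T α i q.2))
      (ν.withDensity fun q => ENNReal.ofReal (p α i q.2))

/-- The transition kernel `K(θ', ·) = Σ_i p_i(θ') δ_{T_i(θ')}` of the Feres random map. -/
def feresKernel (α : ℝ) (t : ℝ) : Measure ℝ :=
  ∑ i : Fin 4, ENNReal.ofReal (p α i t) • Measure.dirac (T α i t)

/-- `k`-step iterates of a transition kernel. -/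
def kerIterate (κ : ℝ → Measure ℝ) : ℕ → ℝ → Measure ℝ
  | 0 => fun t => Measure.dirac t
  | k + 1 => fun t => (κ t).bind (kerIterate κ k)

/-- The probability that a Markov chain with kernel `κ` started at `t` satisfies
`θ_0 ∈ B 0, …, θ_n ∈ B n`. -/
def cylProb (κ : ℝ → Measure ℝ) : ℕ → (ℕ → Set ℝ) → ℝ → ℝ≥0∞
  | 0 => fun B t => Set.indicator (B 0) (fun _ => (1 : ℝ≥0∞)) t
  | n + 1 => fun B t =>
      Set.indicator (B 0)
        (fun _ => ∫⁻ t', cylProb κ n (fun k => B (k + 1)) t' ∂(κ t)) t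

/-- `ν` is the Markov path measure on `ℕ → ℝ` (given by the Ionescu–Tulcea construction)
with initial distribution `ρ` and transition kernel `κ`, characterized by its values
on cylinder sets. -/
def IsMarkovPathMeasure (κ : ℝ → Measure ℝ) (ρ : Measure ℝ) (ν : Measure (ℕ → ℝ)) : Prop :=
  ∀ (n : ℕ) (B : ℕ → Set ℝ), (∀ k, MeasurableSet (B k)) →
    ν {ω | ∀ k ≤ n, ω k ∈ B k} = ∫⁻ t, cylProb κ n B t ∂ρ

/-- The shift map on sequences. -/
def shift : (ℕ → ℝ) → ℕ → ℝ := fun ω n => ω (n + 1)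

/-- Aperiodicity of the Markov chain with kernel `κ` on the state space `S`:
for every state, every common divisor of the return times having positive
probability equals `1` (i.e. every state has period 1). -/
def AperiodicChain (κ : ℝ → Measure ℝ) (S : Set ℝ) : Prop :=
  ∀ t ∈ S, ∀ d : ℕ, (∀ k : ℕ, 1 ≤ k → 0 < kerIterate κ k t {t} → d ∣ k) → d = 1


/-! ### Auxiliary material for the invariance proof -/

lemma measurable_tan : Measurable Real.tan := by
  rw [funext Real.tan_eq_sin_div_cos]
  exact Real.continuous_sin.measurable.div Real.continuous_cos.measurable

lemma measurable_u (a : ℝ) : Measurable (u a) :=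
  measurable_const.mul (measurable_const.add (measurable_const.div measurable_tan))

lemma measurable_p (α : ℝ) (i : Fin 4) : Measurable (p α i) := by
  have hlt : ∀ c : ℝ, MeasurableSet {θ : ℝ | θ < c} := fun c =>
    measurableSet_lt measurable_id measurable_const
  have m1 : Measurable (u α) := measurable_u α
  have m2 : Measurable (u (2*α)) := measurable_u (2*α)
  have m3 : Measurable fun θ : ℝ => u α (-θ) := m1.comp measurable_neg
  have m4 : Measurable fun θ : ℝ => u (2*α) (-θ) := m2.comp measurable_neg
  fin_cases i
  · exact Measurable.ite (hlt α) measurable_const <| Measurable.ite (hlt (π - 3*α)) m1 <|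
      Measurable.ite (hlt (π - 2*α)) (measurable_const.mul m2) measurable_const
  · exact Measurable.ite (hlt (π - 3*α)) measurable_const <|
      Measurable.ite (hlt (π - 2*α)) (m1.sub (measurable_const.mul m2)) <|
      Measurable.ite (hlt (π - α)) m1 measurable_const
  · exact Measurable.ite (hlt (2*α)) measurable_const <|
      Measurable.ite (hlt (3*α)) (measurable_const.mul m4) <|
      Measurable.ite (hlt (π - α)) m3 measurable_const
  · exact Measurable.ite (hlt α) measurable_const <| Measurable.ite (hlt (2*α)) m3 <|
      Measurable.ite (hlt (3*α)) (m3.sub (measurable_const.mul m4)) measurable_const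

lemma measurable_T (α : ℝ) (i : Fin 4) : Measurable (T α i) := by
  fin_cases i
  · exact measurable_id.add measurable_const
  · exact (measurable_neg.add measurable_const).sub measurable_const
  · exact measurable_id.sub measurable_const
  · exact measurable_neg.add measurable_const

/-- The inverse maps of the four `T`'s. -/
def phi (α : ℝ) : Fin 4 → ℝ → ℝ
  | 0 => fun η => η - 2 * α
  | 1 => fun η => 2 * π - 4 * α - η
  | 2 => fun η => η + 2 * α
  | 3 => fun η => 4 * α - η

lemma T_phi (α : ℝ) (i : Fin 4) (η : ℝ) : T α i (phi α i η) = η := by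
  fin_cases i <;> simp [T, phi] <;> ring

lemma measurable_phi (α : ℝ) (i : Fin 4) : Measurable (phi α i) := by
  fin_cases i
  · exact measurable_id.sub measurable_const
  · exact measurable_const.sub measurable_id
  · exact measurable_id.add measurable_const
  · exact measurable_const.sub measurable_id

lemma measurePreserving_phi (α : ℝ) (i : Fin 4) :
    MeasurePreserving (phi α i) volume volume := by
  have hrefl : ∀ c : ℝ, MeasurePreserving (fun x : ℝ => c - x) volume volume := by
    intro c
    have h := (measurePreserving_add_left (volume : Measure ℝ) c).comp
      (Measure.measurePreserving_neg (volume : Measure ℝ))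
    simpa [Function.comp_def, sub_eq_add_neg] using h
  fin_cases i
  · show MeasurePreserving (fun η => η - 2 * α) volume volume
    simpa [sub_eq_add_neg] using measurePreserving_add_right (volume : Measure ℝ) (-(2*α))
  · exact hrefl (2*π - 4*α)
  · exact measurePreserving_add_right (volume : Measure ℝ) (2*α)
  · exact hrefl (4*α)

/-- The density of `mu0`. -/
def w0 : ℝ → ℝ≥0∞ := fun θ => ENNReal.ofReal (1 / 2 * Real.sin θ)

lemma measurable_w0 : Measurable w0 :=
  ENNReal.measurable_ofReal.comp (measurable_const.mul Real.measurable_sin)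

lemma mu0_eq : mu0 = (volume.restrict (Set.Icc 0 π)).withDensity w0 := rfl

/-- The image under `phi α i` of the density of step `i` of the random map. -/
def Bfun (α : ℝ) (i : Fin 4) (η : ℝ) : ℝ≥0∞ :=
  Set.indicator (Set.Icc 0 π) (fun θ => w0 θ * ENNReal.ofReal (p α i θ)) (phi α i η)

lemma measurable_Bfun (α : ℝ) (i : Fin 4) : Measurable (Bfun α i) :=
  ((measurable_w0.mul (ENNReal.measurable_ofReal.comp (measurable_p α i))).indicator
    measurableSet_Icc).comp (measurable_phi α i)

/-! ### Trigonometric lemmas -/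

lemma u_mul_sin (a θ : ℝ) (hs : Real.sin θ ≠ 0) (hc : Real.cos θ ≠ 0) (ha : Real.cos a ≠ 0) :
    u a θ * Real.sin θ * (2 * Real.cos a) = Real.sin (θ + a) := by
  unfold u
  rw [Real.tan_eq_sin_div_cos, Real.tan_eq_sin_div_cos, Real.sin_add]
  field_simp

lemma u_neg_mul_sin (a θ : ℝ) (hs : Real.sin θ ≠ 0) (hc : Real.cos θ ≠ 0) (ha : Real.cos a ≠ 0) :
    u a (-θ) * Real.sin θ * (2 * Real.cos a) = Real.sin (θ - a) := by
  unfold u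
  rw [Real.tan_neg, Real.tan_eq_sin_div_cos, Real.tan_eq_sin_div_cos, Real.sin_sub]
  field_simp
  ring

lemma two_cos_u_mul_sin (b θ : ℝ) (hs : Real.sin θ ≠ 0) (hc : Real.cos θ ≠ 0)
    (hb : Real.cos b ≠ 0) :
    2 * Real.cos b * u b θ * Real.sin θ = Real.sin (θ + b) := by
  unfold u
  rw [Real.tan_eq_sin_div_cos, Real.tan_eq_sin_div_cos, Real.sin_add]
  field_simp

lemma two_cos_u_neg_mul_sin (b θ : ℝ) (hs : Real.sin θ ≠ 0) (hc : Real.cos θ ≠ 0)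
    (hb : Real.cos b ≠ 0) :
    2 * Real.cos b * u b (-θ) * Real.sin θ = Real.sin (θ - b) := by
  unfold u
  rw [Real.tan_neg, Real.tan_eq_sin_div_cos, Real.tan_eq_sin_div_cos, Real.sin_sub]
  field_simp
  ring

lemma K1 (α η : ℝ) :
    Real.sin (3*α - η) - 2 * Real.cos α * Real.sin (2*α - η) = Real.sin (η - α) := by
  rw [show 3*α - η = α+α+α-η by ring, show 2*α - η = α+α-η by ring]
  simp only [Real.sin_add, Real.cos_add, Real.sin_sub, Real.cos_sub]
  linear_combination (Real.sin η * Real.cos α - Real.cos η * Real.sin α) *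
    Real.sin_sq_add_cos_sq α

lemma K2 (α η : ℝ) :
    Real.sin (η - α) + Real.sin (η + α) = 2 * Real.cos α * Real.sin η := by
  rw [Real.sin_sub, Real.sin_add]; ring

lemma K3 (α η : ℝ) : Real.sin (η + α) + Real.sin (3*α - η)
    = 2 * Real.cos α * (Real.sin η - Real.sin (η - 2*α)) := by
  rw [show 3*α - η = α+α+α-η by ring, show η - 2*α = η-α-α by ring]
  simp only [Real.sin_add, Real.cos_add, Real.sin_sub, Real.cos_sub]
  linear_combination (Real.sin η * Real.cos α - Real.cos η * Real.sin α) *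
    Real.sin_sq_add_cos_sq α

lemma K5 (α η : ℝ) :
    Real.sin (η - α) + Real.sin (2*π - 3*α - η) + 2 * Real.cos α * Real.sin (η + 2*α)
      = 2 * Real.cos α * Real.sin η := by
  rw [show 2*π - 3*α - η = π+π-α-α-α-η by ring, show η + 2*α = η+α+α by ring]
  simp only [Real.sin_add, Real.cos_add, Real.sin_sub, Real.cos_sub, Real.sin_pi, Real.cos_pi]
  linear_combination (Real.cos η * Real.sin α + Real.sin η * Real.cos α) *
    Real.sin_sq_add_cos_sq α

lemma K6 (α η : ℝ) :
    Real.sin (2*π - 3*α - η) - 2 * Real.cos α * Real.sin (2*π - 2*α - η)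
      = Real.sin (η + α) := by
  rw [show 2*π - 3*α - η = π+π-α-α-α-η by ring, show 2*π - 2*α - η = π+π-α-α-η by ring]
  simp only [Real.sin_add, Real.cos_add, Real.sin_sub, Real.cos_sub, Real.sin_pi, Real.cos_pi]
  linear_combination (Real.cos η * Real.sin α + Real.sin η * Real.cos α) *
    Real.sin_sq_add_cos_sq α

lemma cos_ne_zero_of_Ioo {θ : ℝ} (h0 : 0 < θ) (h1 : θ < π) (h2 : θ ≠ π/2) :
    Real.cos θ ≠ 0 := by
  intro hc
  obtain ⟨k, hk⟩ := Real.cos_eq_zero_iff.mp hc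
  have hπ := Real.pi_pos
  have hk0 : k = 0 := by
    have hb1 : (0:ℝ) < (2 * (k:ℝ) + 1) := by nlinarith [hk ▸ h0]
    have hb2 : (2 * (k:ℝ) + 1) < 2 := by nlinarith [hk ▸ h1]
    have : (0:ℤ) < 2*k+1 := by exact_mod_cast (by push_cast; linarith : (0:ℝ) < 2*(k:ℝ)+1)
    have : (2*k+1 : ℤ) < 2 := by exact_mod_cast (by push_cast; linarith : (2*(k:ℝ)+1) < 2)
    omega
  apply h2
  rw [hk, hk0]
  push_cast
  ring

set_option maxHeartbeats 1000000 in
lemma sum_Bfun (α : ℝ) (ha0 : 0 < α) (ha6 : α < π/6) (η : ℝ)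
    (h1 : η ≠ 0) (h2 : η ≠ α) (h3 : η ≠ 2*α) (h4 : η ≠ 3*α)
    (h5 : η ≠ π - 3*α) (h6 : η ≠ π - 2*α) (h7 : η ≠ π - α) (h8 : η ≠ π)
    (h9 : η ≠ π/2 + 2*α) (h10 : η ≠ π/2 - 2*α) :
    Bfun α 0 η + Bfun α 1 η + Bfun α 2 η + Bfun α 3 η
      = Set.indicator (Set.Icc 0 π) w0 η := by
  have hpi := Real.pi_pos
  have hca0 : 0 < Real.cos α := Real.cos_pos_of_mem_Ioo ⟨by linarith, by linarith⟩
  have hca : Real.cos α ≠ 0 := ne_of_gt hca0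
  have hc20 : 0 < Real.cos (2*α) := Real.cos_pos_of_mem_Ioo ⟨by linarith, by linarith⟩
  have hc2 : Real.cos (2*α) ≠ 0 := ne_of_gt hc20
  have hd : (4:ℝ) * Real.cos α ≠ 0 := mul_ne_zero (by norm_num) hca
  have hph0 : phi α 0 η = η - 2*α := rfl
  have hph1 : phi α 1 η = 2*π - 4*α - η := rfl
  have hph2 : phi α 2 η = η + 2*α := rfl
  have hph3 : phi α 3 η = 4*α - η := rfl
  have hBmem : ∀ (i : Fin 4) (q : ℝ), phi α i η ∈ Set.Icc 0 π → p α i (phi α i η) = q →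
      Bfun α i η = ENNReal.ofReal (1/2 * Real.sin (phi α i η) * q) := by
    intro i q hm hq
    unfold Bfun w0
    rw [Set.indicator_of_mem hm, hq, ← ENNReal.ofReal_mul
      (by have hm' := Set.mem_Icc.mp hm
          have := Real.sin_nonneg_of_nonneg_of_le_pi hm'.1 hm'.2; linarith)]
  have hBnm : ∀ i : Fin 4, phi α i η ∉ Set.Icc 0 π → Bfun α i η = 0 := fun i h =>
    Set.indicator_of_notMem h _
  have hBzero : ∀ i : Fin 4, (phi α i η ∈ Set.Icc 0 π → p α i (phi α i η) = 0) →
      Bfun α i η = 0 := by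
    intro i h
    by_cases hm : phi α i η ∈ Set.Icc 0 π
    · unfold Bfun
      rw [Set.indicator_of_mem hm, h hm, ENNReal.ofReal_zero, mul_zero]
    · exact hBnm i hm
  by_cases c0 : η < 0
  · -- Out-left
    have v0 : Bfun α 0 η = 0 := hBnm 0 (by rw [hph0]; intro hm; have := (Set.mem_Icc.mp hm).1; linarith)
    have v1 : Bfun α 1 η = 0 := hBnm 1 (by rw [hph1]; intro hm; have := (Set.mem_Icc.mp hm).2; linarith)
    have v2 : Bfun α 2 η = 0 := by
      refine hBzero 2 ?_
      rw [hph2]; intro hm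
      simp only [p]
      rw [if_pos (by linarith : η + 2*α < 2*α)]
    have v3 : Bfun α 3 η = 0 := by
      refine hBzero 3 ?_
      rw [hph3]; intro hm
      simp only [p]
      rw [if_neg (not_lt.mpr (by linarith : α ≤ 4*α - η)),
        if_neg (not_lt.mpr (by linarith : 2*α ≤ 4*α - η)),
        if_neg (not_lt.mpr (by linarith : 3*α ≤ 4*α - η))]
    rw [v0, v1, v2, v3, Set.indicator_of_notMem (by intro hm; have := (Set.mem_Icc.mp hm).1; linarith)]
    simp
  have hx0 : 0 < η := lt_of_le_of_ne (not_lt.mp c0) (Ne.symm h1)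
  by_cases c1 : η < α
  · -- R1 : 0 < η < α
    have v0 : Bfun α 0 η = 0 := hBnm 0 (by rw [hph0]; intro hm; have := (Set.mem_Icc.mp hm).1; linarith)
    have v1 : Bfun α 1 η = 0 := hBnm 1 (by rw [hph1]; intro hm; have := (Set.mem_Icc.mp hm).2; linarith)
    have v3 : Bfun α 3 η = 0 := by
      refine hBzero 3 ?_
      rw [hph3]; intro hm
      simp only [p]
      rw [if_neg (not_lt.mpr (by linarith : α ≤ 4*α - η)),
        if_neg (not_lt.mpr (by linarith : 2*α ≤ 4*α - η)),
        if_neg (not_lt.mpr (by linarith : 3*α ≤ 4*α - η))]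
    have hp2 : p α 2 (phi α 2 η) = 2*Real.cos (2*α) * u (2*α) (-(η+2*α)) := by
      rw [hph2]
      simp only [p]
      rw [if_neg (not_lt.mpr (by linarith : 2*α ≤ η + 2*α)), if_pos (by linarith : η + 2*α < 3*α)]
    have v2 : Bfun α 2 η = ENNReal.ofReal (1/2 * Real.sin η) := by
      rw [hBmem 2 _ (by rw [hph2]; exact Set.mem_Icc.mpr ⟨by linarith, by linarith⟩) hp2, hph2]
      congr 1
      have h := two_cos_u_neg_mul_sin (2*α) (η+2*α)
        (ne_of_gt (Real.sin_pos_of_pos_of_lt_pi (by linarith) (by linarith)))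
        (ne_of_gt (Real.cos_pos_of_mem_Ioo ⟨by linarith, by linarith⟩)) hc2
      rw [show η+2*α-2*α = η by ring] at h
      linear_combination h/2
    rw [v0, v1, v2, v3, Set.indicator_of_mem (Set.mem_Icc.mpr ⟨le_of_lt hx0, by linarith⟩)]
    simp only [zero_add, add_zero, w0]
  have hx1 : α < η := lt_of_le_of_ne (not_lt.mp c1) (Ne.symm h2)
  by_cases c2 : η < 2*α
  · -- R2 : α < η < 2α
    have v0 : Bfun α 0 η = 0 := hBnm 0 (by rw [hph0]; intro hm; have := (Set.mem_Icc.mp hm).1; linarith)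
    have v1 : Bfun α 1 η = 0 := hBnm 1 (by rw [hph1]; intro hm; have := (Set.mem_Icc.mp hm).2; linarith)
    have hp2 : p α 2 (phi α 2 η) = u α (-(η+2*α)) := by
      rw [hph2]
      simp only [p]
      rw [if_neg (not_lt.mpr (by linarith : 2*α ≤ η + 2*α)),
        if_neg (not_lt.mpr (by linarith : 3*α ≤ η + 2*α)), if_pos (by linarith : η + 2*α < π - α)]
    have v2 : Bfun α 2 η = ENNReal.ofReal (Real.sin (η+α) / (4 * Real.cos α)) := by
      rw [hBmem 2 _ (by rw [hph2]; exact Set.mem_Icc.mpr ⟨by linarith, by linarith⟩) hp2, hph2]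
      congr 1
      have h := u_neg_mul_sin α (η+2*α)
        (ne_of_gt (Real.sin_pos_of_pos_of_lt_pi (by linarith) (by linarith)))
        (cos_ne_zero_of_Ioo (by linarith) (by linarith) (by intro hh; apply h10; linarith)) hca
      rw [show η+2*α-α = η+α by ring] at h
      rw [eq_div_iff hd]
      linear_combination h
    have hp3 : p α 3 (phi α 3 η)
        = u α (-(4*α-η)) - 2*Real.cos (2*α) * u (2*α) (-(4*α-η)) := by
      rw [hph3]
      simp only [p]
      rw [if_neg (not_lt.mpr (by linarith : α ≤ 4*α - η)),
        if_neg (not_lt.mpr (by linarith : 2*α ≤ 4*α - η)), if_pos (by linarith : 4*α - η < 3*α)]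
    have v3 : Bfun α 3 η = ENNReal.ofReal (Real.sin (η-α) / (4 * Real.cos α)) := by
      rw [hBmem 3 _ (by rw [hph3]; exact Set.mem_Icc.mpr ⟨by linarith, by linarith⟩) hp3, hph3]
      congr 1
      have hs : Real.sin (4*α-η) ≠ 0 :=
        ne_of_gt (Real.sin_pos_of_pos_of_lt_pi (by linarith) (by linarith))
      have hc : Real.cos (4*α-η) ≠ 0 :=
        ne_of_gt (Real.cos_pos_of_mem_Ioo ⟨by linarith, by linarith⟩)
      have ha := u_neg_mul_sin α (4*α-η) hs hc hca
      rw [show 4*α-η-α = 3*α-η by ring] at ha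
      have hb := two_cos_u_neg_mul_sin (2*α) (4*α-η) hs hc hc2
      rw [show 4*α-η-2*α = 2*α-η by ring] at hb
      rw [eq_div_iff hd]
      linear_combination ha - 2*Real.cos α * hb + K1 α η
    rw [v0, v1, v2, v3, Set.indicator_of_mem (Set.mem_Icc.mpr ⟨le_of_lt hx0, by linarith⟩)]
    simp only [zero_add]
    rw [← ENNReal.ofReal_add
      (div_nonneg (Real.sin_nonneg_of_nonneg_of_le_pi (by linarith) (by linarith)) (by linarith))
      (div_nonneg (Real.sin_nonneg_of_nonneg_of_le_pi (by linarith) (by linarith)) (by linarith))]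
    simp only [w0]
    congr 1
    rw [← add_div,
      show Real.sin (η+α) + Real.sin (η-α) = 2 * Real.cos α * Real.sin η by linarith [K2 α η],
      div_eq_iff hd]
    ring
  have hx2 : 2*α < η := lt_of_le_of_ne (not_lt.mp c2) (Ne.symm h3)
  by_cases c3 : η < 3*α
  · -- R3 : 2α < η < 3α
    have hp0 : p α 0 (phi α 0 η) = 1 := by
      rw [hph0]
      simp only [p]
      rw [if_pos (by linarith : η - 2*α < α)]
    have v0 : Bfun α 0 η = ENNReal.ofReal (1/2 * Real.sin (η-2*α)) := by
      rw [hBmem 0 1 (by rw [hph0]; exact Set.mem_Icc.mpr ⟨by linarith, by linarith⟩) hp0, hph0, mul_one]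
    have v1 : Bfun α 1 η = 0 := by
      refine hBzero 1 ?_
      rw [hph1]; intro hm
      simp only [p]
      rw [if_neg (not_lt.mpr (by linarith : π - 3*α ≤ 2*π - 4*α - η)),
        if_neg (not_lt.mpr (by linarith : π - 2*α ≤ 2*π - 4*α - η)),
        if_neg (not_lt.mpr (by linarith : π - α ≤ 2*π - 4*α - η))]
    have hp2 : p α 2 (phi α 2 η) = u α (-(η+2*α)) := by
      rw [hph2]
      simp only [p]
      rw [if_neg (not_lt.mpr (by linarith : 2*α ≤ η + 2*α)),
        if_neg (not_lt.mpr (by linarith : 3*α ≤ η + 2*α)), if_pos (by linarith : η + 2*α < π - α)]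
    have v2 : Bfun α 2 η = ENNReal.ofReal (Real.sin (η+α) / (4 * Real.cos α)) := by
      rw [hBmem 2 _ (by rw [hph2]; exact Set.mem_Icc.mpr ⟨by linarith, by linarith⟩) hp2, hph2]
      congr 1
      have h := u_neg_mul_sin α (η+2*α)
        (ne_of_gt (Real.sin_pos_of_pos_of_lt_pi (by linarith) (by linarith)))
        (cos_ne_zero_of_Ioo (by linarith) (by linarith) (by intro hh; apply h10; linarith)) hca
      rw [show η+2*α-α = η+α by ring] at h
      rw [eq_div_iff hd]
      linear_combination h
    have hp3 : p α 3 (phi α 3 η) = u α (-(4*α-η)) := by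
      rw [hph3]
      simp only [p]
      rw [if_neg (not_lt.mpr (by linarith : α ≤ 4*α - η)), if_pos (by linarith : 4*α - η < 2*α)]
    have v3 : Bfun α 3 η = ENNReal.ofReal (Real.sin (3*α-η) / (4 * Real.cos α)) := by
      rw [hBmem 3 _ (by rw [hph3]; exact Set.mem_Icc.mpr ⟨by linarith, by linarith⟩) hp3, hph3]
      congr 1
      have ha := u_neg_mul_sin α (4*α-η)
        (ne_of_gt (Real.sin_pos_of_pos_of_lt_pi (by linarith) (by linarith)))
        (ne_of_gt (Real.cos_pos_of_mem_Ioo ⟨by linarith, by linarith⟩)) hca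
      rw [show 4*α-η-α = 3*α-η by ring] at ha
      rw [eq_div_iff hd]
      linear_combination ha
    rw [v0, v1, v2, v3, Set.indicator_of_mem (Set.mem_Icc.mpr ⟨le_of_lt hx0, by linarith⟩)]
    simp only [zero_add, add_zero]
    have hA : (0:ℝ) ≤ 1/2 * Real.sin (η-2*α) := by
      have := Real.sin_nonneg_of_nonneg_of_le_pi (show (0:ℝ) ≤ η-2*α by linarith)
        (show η-2*α ≤ π by linarith)
      linarith
    have hB : (0:ℝ) ≤ Real.sin (η+α) / (4 * Real.cos α) :=
      div_nonneg (Real.sin_nonneg_of_nonneg_of_le_pi (by linarith) (by linarith)) (by linarith)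
    have hC : (0:ℝ) ≤ Real.sin (3*α-η) / (4 * Real.cos α) :=
      div_nonneg (Real.sin_nonneg_of_nonneg_of_le_pi (by linarith) (by linarith)) (by linarith)
    rw [← ENNReal.ofReal_add hA hB, ← ENNReal.ofReal_add (add_nonneg hA hB) hC]
    simp only [w0]
    congr 1
    rw [add_assoc, ← add_div, K3 α η]
    field_simp
    ring
  have hx3 : 3*α < η := lt_of_le_of_ne (not_lt.mp c3) (Ne.symm h4)
  by_cases c4 : η < π - 3*α
  · -- R4 : 3α < η < π - 3α
    have hp0 : p α 0 (phi α 0 η) = u α (η-2*α) := by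
      rw [hph0]
      simp only [p]
      rw [if_neg (not_lt.mpr (by linarith : α ≤ η - 2*α)), if_pos (by linarith : η - 2*α < π - 3*α)]
    have v0 : Bfun α 0 η = ENNReal.ofReal (Real.sin (η-α) / (4 * Real.cos α)) := by
      rw [hBmem 0 _ (by rw [hph0]; exact Set.mem_Icc.mpr ⟨by linarith, by linarith⟩) hp0, hph0]
      congr 1
      have h := u_mul_sin α (η-2*α)
        (ne_of_gt (Real.sin_pos_of_pos_of_lt_pi (by linarith) (by linarith)))
        (cos_ne_zero_of_Ioo (by linarith) (by linarith) (by intro hh; apply h9; linarith)) hca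
      rw [show η-2*α+α = η-α by ring] at h
      rw [eq_div_iff hd]
      linear_combination h
    have v1 : Bfun α 1 η = 0 := by
      refine hBzero 1 ?_
      rw [hph1]; intro hm
      simp only [p]
      rw [if_neg (not_lt.mpr (by linarith : π - 3*α ≤ 2*π - 4*α - η)),
        if_neg (not_lt.mpr (by linarith : π - 2*α ≤ 2*π - 4*α - η)),
        if_neg (not_lt.mpr (by linarith : π - α ≤ 2*π - 4*α - η))]
    have hp2 : p α 2 (phi α 2 η) = u α (-(η+2*α)) := by
      rw [hph2]
      simp only [p]
      rw [if_neg (not_lt.mpr (by linarith : 2*α ≤ η + 2*α)),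
        if_neg (not_lt.mpr (by linarith : 3*α ≤ η + 2*α)), if_pos (by linarith : η + 2*α < π - α)]
    have v2 : Bfun α 2 η = ENNReal.ofReal (Real.sin (η+α) / (4 * Real.cos α)) := by
      rw [hBmem 2 _ (by rw [hph2]; exact Set.mem_Icc.mpr ⟨by linarith, by linarith⟩) hp2, hph2]
      congr 1
      have h := u_neg_mul_sin α (η+2*α)
        (ne_of_gt (Real.sin_pos_of_pos_of_lt_pi (by linarith) (by linarith)))
        (cos_ne_zero_of_Ioo (by linarith) (by linarith) (by intro hh; apply h10; linarith)) hca
      rw [show η+2*α-α = η+α by ring] at h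
      rw [eq_div_iff hd]
      linear_combination h
    have v3 : Bfun α 3 η = 0 := by
      refine hBzero 3 ?_
      rw [hph3]; intro hm
      simp only [p]
      rw [if_pos (by linarith : 4*α - η < α)]
    rw [v0, v1, v2, v3, Set.indicator_of_mem (Set.mem_Icc.mpr ⟨le_of_lt hx0, by linarith⟩)]
    simp only [zero_add, add_zero]
    rw [← ENNReal.ofReal_add
      (div_nonneg (Real.sin_nonneg_of_nonneg_of_le_pi (by linarith) (by linarith)) (by linarith))
      (div_nonneg (Real.sin_nonneg_of_nonneg_of_le_pi (by linarith) (by linarith)) (by linarith))]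
    simp only [w0]
    congr 1
    rw [← add_div, K2 α η, div_eq_iff hd]
    ring
  have hx4 : π - 3*α < η := lt_of_le_of_ne (not_lt.mp c4) (Ne.symm h5)
  by_cases c5 : η < π - 2*α
  · -- R5 : π - 3α < η < π - 2α
    have hp0 : p α 0 (phi α 0 η) = u α (η-2*α) := by
      rw [hph0]
      simp only [p]
      rw [if_neg (not_lt.mpr (by linarith : α ≤ η - 2*α)), if_pos (by linarith : η - 2*α < π - 3*α)]
    have v0 : Bfun α 0 η = ENNReal.ofReal (Real.sin (η-α) / (4 * Real.cos α)) := by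
      rw [hBmem 0 _ (by rw [hph0]; exact Set.mem_Icc.mpr ⟨by linarith, by linarith⟩) hp0, hph0]
      congr 1
      have h := u_mul_sin α (η-2*α)
        (ne_of_gt (Real.sin_pos_of_pos_of_lt_pi (by linarith) (by linarith)))
        (cos_ne_zero_of_Ioo (by linarith) (by linarith) (by intro hh; apply h9; linarith)) hca
      rw [show η-2*α+α = η-α by ring] at h
      rw [eq_div_iff hd]
      linear_combination h
    have hp1 : p α 1 (phi α 1 η) = u α (2*π-4*α-η) := by
      rw [hph1]
      simp only [p]
      rw [if_neg (not_lt.mpr (by linarith : π - 3*α ≤ 2*π - 4*α - η)),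
        if_neg (not_lt.mpr (by linarith : π - 2*α ≤ 2*π - 4*α - η)),
        if_pos (by linarith : 2*π - 4*α - η < π - α)]
    have v1 : Bfun α 1 η = ENNReal.ofReal (Real.sin (2*π-3*α-η) / (4 * Real.cos α)) := by
      rw [hBmem 1 _ (by rw [hph1]; exact Set.mem_Icc.mpr ⟨by linarith, by linarith⟩) hp1, hph1]
      congr 1
      have h := u_mul_sin α (2*π-4*α-η)
        (ne_of_gt (Real.sin_pos_of_pos_of_lt_pi (by linarith) (by linarith)))
        (ne_of_lt (Real.cos_neg_of_pi_div_two_lt_of_lt (by linarith) (by linarith))) hca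
      rw [show 2*π-4*α-η+α = 2*π-3*α-η by ring] at h
      rw [eq_div_iff hd]
      linear_combination h
    have hp2 : p α 2 (phi α 2 η) = 1 := by
      rw [hph2]
      simp only [p]
      rw [if_neg (not_lt.mpr (by linarith : 2*α ≤ η + 2*α)),
        if_neg (not_lt.mpr (by linarith : 3*α ≤ η + 2*α)),
        if_neg (not_lt.mpr (by linarith : π - α ≤ η + 2*α))]
    have v2 : Bfun α 2 η = ENNReal.ofReal (1/2 * Real.sin (η+2*α)) := by
      rw [hBmem 2 1 (by rw [hph2]; exact Set.mem_Icc.mpr ⟨by linarith, by linarith⟩) hp2, hph2, mul_one]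
    have v3 : Bfun α 3 η = 0 := by
      refine hBzero 3 ?_
      rw [hph3]; intro hm
      simp only [p]
      rw [if_pos (by linarith : 4*α - η < α)]
    rw [v0, v1, v2, v3, Set.indicator_of_mem (Set.mem_Icc.mpr ⟨le_of_lt hx0, by linarith⟩)]
    simp only [add_zero]
    have hA : (0:ℝ) ≤ Real.sin (η-α) / (4 * Real.cos α) :=
      div_nonneg (Real.sin_nonneg_of_nonneg_of_le_pi (by linarith) (by linarith)) (by linarith)
    have hB : (0:ℝ) ≤ Real.sin (2*π-3*α-η) / (4 * Real.cos α) :=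
      div_nonneg (Real.sin_nonneg_of_nonneg_of_le_pi (by linarith) (by linarith)) (by linarith)
    have hC : (0:ℝ) ≤ 1/2 * Real.sin (η+2*α) := by
      have := Real.sin_nonneg_of_nonneg_of_le_pi (show (0:ℝ) ≤ η+2*α by linarith)
        (show η+2*α ≤ π by linarith)
      linarith
    rw [← ENNReal.ofReal_add hA hB, ← ENNReal.ofReal_add (add_nonneg hA hB) hC]
    simp only [w0]
    congr 1
    rw [← add_div,
      show Real.sin (η-α) + Real.sin (2*π-3*α-η)
        = 2*Real.cos α*Real.sin η - 2*Real.cos α*Real.sin (η+2*α) by linarith [K5 α η]]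
    field_simp
    ring
  have hx5 : π - 2*α < η := lt_of_le_of_ne (not_lt.mp c5) (Ne.symm h6)
  by_cases c6 : η < π - α
  · -- R6 : π - 2α < η < π - α
    have hp0 : p α 0 (phi α 0 η) = u α (η-2*α) := by
      rw [hph0]
      simp only [p]
      rw [if_neg (not_lt.mpr (by linarith : α ≤ η - 2*α)), if_pos (by linarith : η - 2*α < π - 3*α)]
    have v0 : Bfun α 0 η = ENNReal.ofReal (Real.sin (η-α) / (4 * Real.cos α)) := by
      rw [hBmem 0 _ (by rw [hph0]; exact Set.mem_Icc.mpr ⟨by linarith, by linarith⟩) hp0, hph0]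
      congr 1
      have h := u_mul_sin α (η-2*α)
        (ne_of_gt (Real.sin_pos_of_pos_of_lt_pi (by linarith) (by linarith)))
        (cos_ne_zero_of_Ioo (by linarith) (by linarith) (by intro hh; apply h9; linarith)) hca
      rw [show η-2*α+α = η-α by ring] at h
      rw [eq_div_iff hd]
      linear_combination h
    have hp1 : p α 1 (phi α 1 η)
        = u α (2*π-4*α-η) - 2*Real.cos (2*α) * u (2*α) (2*π-4*α-η) := by
      rw [hph1]
      simp only [p]
      rw [if_neg (not_lt.mpr (by linarith : π - 3*α ≤ 2*π - 4*α - η)),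
        if_pos (by linarith : 2*π - 4*α - η < π - 2*α)]
    have v1 : Bfun α 1 η = ENNReal.ofReal (Real.sin (η+α) / (4 * Real.cos α)) := by
      rw [hBmem 1 _ (by rw [hph1]; exact Set.mem_Icc.mpr ⟨by linarith, by linarith⟩) hp1, hph1]
      congr 1
      have hs : Real.sin (2*π-4*α-η) ≠ 0 :=
        ne_of_gt (Real.sin_pos_of_pos_of_lt_pi (by linarith) (by linarith))
      have hc : Real.cos (2*π-4*α-η) ≠ 0 :=
        ne_of_lt (Real.cos_neg_of_pi_div_two_lt_of_lt (by linarith) (by linarith))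
      have ha := u_mul_sin α (2*π-4*α-η) hs hc hca
      rw [show 2*π-4*α-η+α = 2*π-3*α-η by ring] at ha
      have hb := two_cos_u_mul_sin (2*α) (2*π-4*α-η) hs hc hc2
      rw [show 2*π-4*α-η+2*α = 2*π-2*α-η by ring] at hb
      rw [eq_div_iff hd]
      linear_combination ha - 2*Real.cos α * hb + K6 α η
    have v2 : Bfun α 2 η = 0 := hBnm 2 (by rw [hph2]; intro hm; have := (Set.mem_Icc.mp hm).2; linarith)
    have v3 : Bfun α 3 η = 0 := hBnm 3 (by rw [hph3]; intro hm; have := (Set.mem_Icc.mp hm).1; linarith)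
    rw [v0, v1, v2, v3, Set.indicator_of_mem (Set.mem_Icc.mpr ⟨le_of_lt hx0, by linarith⟩)]
    simp only [add_zero]
    rw [← ENNReal.ofReal_add
      (div_nonneg (Real.sin_nonneg_of_nonneg_of_le_pi (by linarith) (by linarith)) (by linarith))
      (div_nonneg (Real.sin_nonneg_of_nonneg_of_le_pi (by linarith) (by linarith)) (by linarith))]
    simp only [w0]
    congr 1
    rw [← add_div, K2 α η, div_eq_iff hd]
    ring
  have hx6 : π - α < η := lt_of_le_of_ne (not_lt.mp c6) (Ne.symm h7)
  by_cases c7 : η < π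
  · -- R7 : π - α < η < π
    have hp0 : p α 0 (phi α 0 η) = 2*Real.cos (2*α) * u (2*α) (η-2*α) := by
      rw [hph0]
      simp only [p]
      rw [if_neg (not_lt.mpr (by linarith : α ≤ η - 2*α)),
        if_neg (not_lt.mpr (by linarith : π - 3*α ≤ η - 2*α)),
        if_pos (by linarith : η - 2*α < π - 2*α)]
    have v0 : Bfun α 0 η = ENNReal.ofReal (1/2 * Real.sin η) := by
      rw [hBmem 0 _ (by rw [hph0]; exact Set.mem_Icc.mpr ⟨by linarith, by linarith⟩) hp0, hph0]
      congr 1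
      have h := two_cos_u_mul_sin (2*α) (η-2*α)
        (ne_of_gt (Real.sin_pos_of_pos_of_lt_pi (by linarith) (by linarith)))
        (ne_of_lt (Real.cos_neg_of_pi_div_two_lt_of_lt (by linarith) (by linarith))) hc2
      rw [show η-2*α+2*α = η by ring] at h
      linear_combination h/2
    have v1 : Bfun α 1 η = 0 := by
      refine hBzero 1 ?_
      rw [hph1]; intro hm
      simp only [p]
      rw [if_pos (by linarith : 2*π - 4*α - η < π - 3*α)]
    have v2 : Bfun α 2 η = 0 := hBnm 2 (by rw [hph2]; intro hm; have := (Set.mem_Icc.mp hm).2; linarith)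
    have v3 : Bfun α 3 η = 0 := hBnm 3 (by rw [hph3]; intro hm; have := (Set.mem_Icc.mp hm).1; linarith)
    rw [v0, v1, v2, v3, Set.indicator_of_mem (Set.mem_Icc.mpr ⟨le_of_lt hx0, le_of_lt c7⟩)]
    simp only [zero_add, add_zero, w0]
  -- Out-right : π < η
  have hx7 : π < η := lt_of_le_of_ne (not_lt.mp c7) (Ne.symm h8)
  have v0 : Bfun α 0 η = 0 := by
    refine hBzero 0 ?_
    rw [hph0]; intro hm
    simp only [p]
    rw [if_neg (not_lt.mpr (by linarith : α ≤ η - 2*α)),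
      if_neg (not_lt.mpr (by linarith : π - 3*α ≤ η - 2*α)),
      if_neg (not_lt.mpr (by linarith : π - 2*α ≤ η - 2*α))]
  have v1 : Bfun α 1 η = 0 := by
    refine hBzero 1 ?_
    rw [hph1]; intro hm
    simp only [p]
    rw [if_pos (by linarith : 2*π - 4*α - η < π - 3*α)]
  have v2 : Bfun α 2 η = 0 := hBnm 2 (by rw [hph2]; intro hm; have := (Set.mem_Icc.mp hm).2; linarith)
  have v3 : Bfun α 3 η = 0 := hBnm 3 (by rw [hph3]; intro hm; have := (Set.mem_Icc.mp hm).1; linarith)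
  rw [v0, v1, v2, v3, Set.indicator_of_notMem (by intro hm; have := (Set.mem_Icc.mp hm).2; linarith)]
  simp

lemma step_eq (α : ℝ) (hα : α ∈ Set.Ioo 0 (π / 6)) (g : ℝ → ℝ≥0∞) (hg : Measurable g) :
    ∑ i : Fin 4, ∫⁻ θ, g (T α i θ) * ENNReal.ofReal (p α i θ) ∂mu0 = ∫⁻ θ, g θ ∂mu0 := by
  have hwtop : ∀ᵐ x ∂(volume.restrict (Set.Icc 0 π)), w0 x < ⊤ :=
    ae_of_all _ fun x => ENNReal.ofReal_lt_top
  have key_i : ∀ i : Fin 4, ∫⁻ θ, g (T α i θ) * ENNReal.ofReal (p α i θ) ∂mu0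
      = ∫⁻ η, g η * Bfun α i η := by
    intro i
    have hfm : Measurable fun θ => w0 θ * (g (T α i θ) * ENNReal.ofReal (p α i θ)) :=
      measurable_w0.mul ((hg.comp (measurable_T α i)).mul
        (ENNReal.measurable_ofReal.comp (measurable_p α i)))
    rw [mu0_eq, lintegral_withDensity_eq_lintegral_mul_non_measurable _ measurable_w0 hwtop]
    simp only [Pi.mul_apply]
    rw [← lintegral_indicator measurableSet_Icc]
    rw [← (measurePreserving_phi α i).lintegral_comp (hfm.indicator measurableSet_Icc)]
    refine lintegral_congr fun η => ?_
    unfold Bfun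
    by_cases hm : phi α i η ∈ Set.Icc 0 π
    · rw [Set.indicator_of_mem hm, Set.indicator_of_mem hm, T_phi]
      ring
    · rw [Set.indicator_of_notMem hm, Set.indicator_of_notMem hm, mul_zero]
  calc ∑ i : Fin 4, ∫⁻ θ, g (T α i θ) * ENNReal.ofReal (p α i θ) ∂mu0
      = ∑ i : Fin 4, ∫⁻ η, g η * Bfun α i η := Finset.sum_congr rfl fun i _ => key_i i
    _ = ∫⁻ η, ∑ i : Fin 4, g η * Bfun α i η :=
        (lintegral_finset_sum _ fun i _ => hg.mul (measurable_Bfun α i)).symm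
    _ = ∫⁻ η, g η * Set.indicator (Set.Icc 0 π) w0 η := by
        apply lintegral_congr_ae
        have hae : ∀ᵐ η : ℝ ∂volume, η ∉ ({0, α, 2*α, 3*α, π - 3*α, π - 2*α, π - α, π,
            π/2 + 2*α, π/2 - 2*α} : Set ℝ) :=
          (Set.toFinite _).countable.ae_notMem volume
        filter_upwards [hae] with η hη
        simp only [Set.mem_insert_iff, Set.mem_singleton_iff, not_or] at hη
        obtain ⟨n1, n2, n3, n4, n5, n6, n7, n8, n9, n10⟩ := hη
        rw [← Finset.mul_sum, Fin.sum_univ_four,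
          sum_Bfun α hα.1 hα.2 η n1 n2 n3 n4 n5 n6 n7 n8 n9 n10]
    _ = ∫⁻ η, Set.indicator (Set.Icc 0 π) (fun θ => g θ * w0 θ) η := by
        refine lintegral_congr fun η => ?_
        by_cases hm : η ∈ Set.Icc 0 π
        · rw [Set.indicator_of_mem hm, Set.indicator_of_mem hm]
        · rw [Set.indicator_of_notMem hm, Set.indicator_of_notMem hm, mul_zero]
    _ = ∫⁻ η in Set.Icc 0 π, g η * w0 η := lintegral_indicator measurableSet_Icc _
    _ = ∫⁻ θ, g θ ∂mu0 := by
        rw [mu0_eq, lintegral_withDensity_eq_lintegral_mul_non_measurable _ measurable_w0 hwtop]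
        exact lintegral_congr fun θ => by simp only [Pi.mul_apply]; exact mul_comm _ _

end RandomBilliard


open RandomBilliard

/-- if the deterministic billiard map `F` preserves `λ × μ`, then
`λ × μ` is invariant for the random billiard map `F̄(s, θ) = F(s, T_i(θ))` with
probability `p_i(θ)`. -/

theorem prod_measure_invariant_for_F_comp_Tbar (α : ℝ) (hα : α ∈ Set.Ioo 0 (π / 6))
    (L : ℝ) (hL : 0 < L) (lam : Measure ℝ)
    (hlam : lam = (ENNReal.ofReal L)⁻¹ • volume.restrict (Set.Icc 0 L))
    (F : ℝ × ℝ → ℝ × ℝ)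
    (hF : MeasurePreserving F (lam.prod mu0) (lam.prod mu0))
    (hFrange : ∀ q ∈ Set.Icc 0 L ×ˢ Set.Icc 0 π, F q ∈ Set.Icc 0 L ×ˢ Set.Icc 0 π)
    (E : Set (ℝ × ℝ)) (hE : MeasurableSet E)
    (hEsub : E ⊆ Set.Icc 0 L ×ˢ Set.Icc 0 π) :
    (lam.prod mu0) E =
      ∑ i : Fin 4, ∫⁻ θ, (∫⁻ s,
        Set.indicator E (fun _ => (1 : ℝ≥0∞)) (F (s, T α i θ)) * ENNReal.ofReal (p α i θ)
          ∂lam) ∂mu0 := by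
  haveI hlamfin : IsFiniteMeasure lam := by
    constructor
    rw [hlam]
    simp only [Measure.smul_apply, smul_eq_mul]
    refine ENNReal.mul_lt_top ?_ ?_
    · exact (ENNReal.inv_lt_top).2 (ENNReal.ofReal_pos.mpr hL)
    · rw [Measure.restrict_apply_univ, Real.volume_Icc]
      exact ENNReal.ofReal_lt_top
  haveI hmufin : IsFiniteMeasure mu0 := by
    constructor
    rw [mu0_eq, withDensity_apply _ MeasurableSet.univ, Measure.restrict_univ]
    calc ∫⁻ θ in Set.Icc 0 π, w0 θ ∂volume ≤ ∫⁻ _ in Set.Icc 0 π, 1 ∂volume := by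
          refine lintegral_mono fun θ => ?_
          refine ENNReal.ofReal_le_one.mpr ?_
          nlinarith [Real.sin_le_one θ, Real.neg_one_le_sin θ]
      _ < ⊤ := by
          rw [MeasureTheory.lintegral_one, Measure.restrict_apply_univ]
          simp [Real.volume_Icc]
  have hFm : Measurable F := hF.measurable
  have hind : Measurable (Set.indicator E (fun _ => (1 : ℝ≥0∞))) :=
    measurable_const.indicator hE
  have hGm : Measurable fun q : ℝ × ℝ => Set.indicator E (fun _ => (1 : ℝ≥0∞)) (F q) :=
    hind.comp hFm
  set g : ℝ → ℝ≥0∞ := fun t => ∫⁻ s, Set.indicator E (fun _ => (1 : ℝ≥0∞)) (F (s, t)) ∂lam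
    with hgdef
  have hg : Measurable g := by
    have : Measurable fun q : ℝ × ℝ => Set.indicator E (fun _ => (1 : ℝ≥0∞)) (F (q.2, q.1)) :=
      hGm.comp measurable_swap
    exact this.lintegral_prod_right'
  have hswap : Measurable fun q : ℝ × ℝ => Set.indicator E (fun _ => (1 : ℝ≥0∞)) (F (q.2, q.1)) :=
    hGm.comp measurable_swap
  calc (lam.prod mu0) E
      = ∫⁻ q, Set.indicator E (fun _ => (1 : ℝ≥0∞)) q ∂(lam.prod mu0) := by
        rw [← lintegral_indicator_one hE]; rfl
    _ = ∫⁻ q, Set.indicator E (fun _ => (1 : ℝ≥0∞)) (F q) ∂(lam.prod mu0) :=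
        (hF.lintegral_comp hind).symm
    _ = ∫⁻ s, ∫⁻ t, Set.indicator E (fun _ => (1 : ℝ≥0∞)) (F (s, t)) ∂mu0 ∂lam :=
        lintegral_prod _ hGm.aemeasurable
    _ = ∫⁻ t, ∫⁻ s, Set.indicator E (fun _ => (1 : ℝ≥0∞)) (F (s, t)) ∂lam ∂mu0 :=
        lintegral_lintegral_swap (hswap.comp measurable_swap).aemeasurable
    _ = ∫⁻ t, g t ∂mu0 := rfl
    _ = ∑ i : Fin 4, ∫⁻ θ, g (T α i θ) * ENNReal.ofReal (p α i θ) ∂mu0 :=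
        (step_eq α hα g hg).symm
    _ = ∑ i : Fin 4, ∫⁻ θ, (∫⁻ s,
          Set.indicator E (fun _ => (1 : ℝ≥0∞)) (F (s, T α i θ)) * ENNReal.ofReal (p α i θ)
            ∂lam) ∂mu0 := by
        refine Finset.sum_congr rfl fun i _ => ?_
        refine lintegral_congr fun θ => ?_
        rw [lintegral_mul_const' _ _ ENNReal.ofReal_ne_top]
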